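/- Let n, l be positive integers, λ > 0, μ > 0, T ≥ 0 and W ≥ 0. Let M : [0,T] → (n×n real symmetric matrices) be differentiable, let 𝒜 : [0,T] → ℝ^{n×n}, ℬ : [0,T] → ℝ^{n×l}, let w : [0,T] → ℝ^l with ‖w(t)‖ ≤ W for all t ∈ [0,T], and let x : [0,T] → ℝ^n be differentiable with x'(t) = 𝒜(t)x(t) + ℬ(t)w(t) for all t ∈ [0,T]. Assume for every t ∈ [0,T] the block matrix [[M(t)𝒜(t) + 𝒜(t)ᵀM(t) + M'(t) + λM(t), M(t)ℬ(t)], [ℬ(t)ᵀM(t), −μI_l]] is negative semidefinite. Then the Lyapunov function V(t) := x(t)ᵀM(t)x(t) satisfies, for every t ∈ [0,T], V(t) ≤ e^{−λt}·V(0) + (μ/λ)·W²·(1 − e^{−λt}). -/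

import Mathlib

open Matrix Set

noncomputable def euclNorm {ι : Type*} [Fintype ι] (v : ι → ℝ) : ℝ := Real.sqrt (v ⬝ᵥ v)

lemma hasDeriv_quad {n : ℕ} {s : Set ℝ} {t : ℝ}
    {M : ℝ → Matrix (Fin n) (Fin n) ℝ} {Md : Matrix (Fin n) (Fin n) ℝ}
    {x : ℝ → Fin n → ℝ} {xd : Fin n → ℝ}
    (hM : ∀ i j, HasDerivWithinAt (fun s => M s i j) (Md i j) s t)
    (hx : HasDerivWithinAt x xd s t) :
    HasDerivWithinAt (fun s => x s ⬝ᵥ (M s *ᵥ x s))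
      (xd ⬝ᵥ (M t *ᵥ x t) + x t ⬝ᵥ (Md *ᵥ x t) + x t ⬝ᵥ (M t *ᵥ xd)) s t := by
  have hxi : ∀ i, HasDerivWithinAt (fun s => x s i) (xd i) s t :=
    (hasDerivWithinAt_pi).1 hx
  have key : HasDerivWithinAt (fun s => ∑ i, ∑ j, x s i * (M s i j * x s j))
      (∑ i, ∑ j, (xd i * (M t i j * x t j)
        + x t i * (Md i j * x t j + M t i j * xd j))) s t := by
    refine HasDerivWithinAt.fun_sum fun i _ => ?_
    refine HasDerivWithinAt.fun_sum fun j _ => ?_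
    exact (hxi i).mul ((hM i j).mul (hxi j))
  convert key using 1
  · funext s
    simp [dotProduct, mulVec, Finset.mul_sum]
  · simp [dotProduct, mulVec, Finset.mul_sum, Finset.sum_add_distrib, mul_add]
    ring

/-- Integrated (Grönwall) form of the dissipation inequality derived from the
first robust-CCM matrix inequality (Eq. (10) of the paper): along trajectories of
`x' = 𝒜x + ℬw` with `‖w‖ ≤ W`, the Lyapunov function `V(t) = x(t)ᵀM(t)x(t)`
satisfies `V(t) ≤ e^{-λt} V(0) + (μ/λ) W² (1 - e^{-λt})`. -/
theorem gronwall_dissipation_bound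
    (n l : ℕ) (hn : 0 < n) (hl : 0 < l)
    (lam mu T W : ℝ) (hlam : 0 < lam) (hmu : 0 < mu) (hT : 0 ≤ T) (hW : 0 ≤ W)
    (M M' : ℝ → Matrix (Fin n) (Fin n) ℝ)
    (hMsymm : ∀ t ∈ Set.Icc (0 : ℝ) T, (M t).IsSymm)
    (hMderiv : ∀ t ∈ Set.Icc (0 : ℝ) T, ∀ i j,
      HasDerivWithinAt (fun s => M s i j) (M' t i j) (Set.Icc (0 : ℝ) T) t)
    (𝒜 : ℝ → Matrix (Fin n) (Fin n) ℝ) (ℬ : ℝ → Matrix (Fin n) (Fin l) ℝ)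
    (w : ℝ → Fin l → ℝ) (hw : ∀ t ∈ Set.Icc (0 : ℝ) T, euclNorm (w t) ≤ W)
    (x : ℝ → Fin n → ℝ)
    (hx : ∀ t ∈ Set.Icc (0 : ℝ) T,
      HasDerivWithinAt x (𝒜 t *ᵥ x t + ℬ t *ᵥ w t) (Set.Icc (0 : ℝ) T) t)
    (hineq : ∀ t ∈ Set.Icc (0 : ℝ) T,
      (-(Matrix.fromBlocks
          (M t * 𝒜 t + (𝒜 t)ᵀ * M t + M' t + lam • M t) (M t * ℬ t)
          ((ℬ t)ᵀ * M t) (-(mu • (1 : Matrix (Fin l) (Fin l) ℝ))))).PosSemidef) :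
    ∀ t ∈ Set.Icc (0 : ℝ) T,
      x t ⬝ᵥ (M t *ᵥ x t) ≤
        Real.exp (-lam * t) * (x 0 ⬝ᵥ (M 0 *ᵥ x 0))
          + (mu / lam) * W ^ 2 * (1 - Real.exp (-lam * t)) := by
  set S := Set.Icc (0 : ℝ) T with hS
  set V : ℝ → ℝ := fun s => x s ⬝ᵥ (M s *ᵥ x s) with hV
  set Vd : ℝ → ℝ := fun t =>
    (𝒜 t *ᵥ x t + ℬ t *ᵥ w t) ⬝ᵥ (M t *ᵥ x t) + x t ⬝ᵥ (M' t *ᵥ x t)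
      + x t ⬝ᵥ (M t *ᵥ (𝒜 t *ᵥ x t + ℬ t *ᵥ w t)) with hVd
  have hVderiv : ∀ t ∈ S, HasDerivWithinAt V (Vd t) S t := fun t ht =>
    hasDeriv_quad (hMderiv t ht) (hx t ht)
  -- key differential inequality
  have hkey : ∀ t ∈ S, Vd t ≤ -lam * V t + mu * W ^ 2 := by
    intro t ht
    have hpsd := (hineq t ht).dotProduct_mulVec_nonneg (Sum.elim (x t) (w t))
    have hww : w t ⬝ᵥ w t ≤ W ^ 2 := by
      have h0 : (0:ℝ) ≤ w t ⬝ᵥ w t :=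
        Finset.sum_nonneg fun i _ => mul_self_nonneg _
      have h1 := hw t ht
      unfold euclNorm at h1
      nlinarith [Real.sq_sqrt h0, Real.sqrt_nonneg (w t ⬝ᵥ w t)]
    set u := x t
    set v := w t
    set A := 𝒜 t
    set B := ℬ t
    set Mt := M t
    set Mp := M' t
    have hexp : Sum.elim u v ⬝ᵥ
        ((Matrix.fromBlocks (Mt * A + Aᵀ * Mt + Mp + lam • Mt) (Mt * B)
          (Bᵀ * Mt) (-(mu • (1 : Matrix (Fin l) (Fin l) ℝ)))) *ᵥ Sum.elim u v)
        = u ⬝ᵥ ((Mt * A) *ᵥ u) + u ⬝ᵥ ((Aᵀ * Mt) *ᵥ u) + u ⬝ᵥ (Mp *ᵥ u)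
          + lam * (u ⬝ᵥ (Mt *ᵥ u)) + u ⬝ᵥ ((Mt * B) *ᵥ v) + v ⬝ᵥ ((Bᵀ * Mt) *ᵥ u)
          - mu * (v ⬝ᵥ v) := by
      rw [fromBlocks_mulVec, sumElim_dotProduct_sumElim]
      simp [add_mulVec, dotProduct_add, smul_mulVec, neg_mulVec, dotProduct_neg,
        dotProduct_smul, smul_eq_mul]
      ring
    have hineq2 : u ⬝ᵥ ((Mt * A) *ᵥ u) + u ⬝ᵥ ((Aᵀ * Mt) *ᵥ u) + u ⬝ᵥ (Mp *ᵥ u)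
          + lam * (u ⬝ᵥ (Mt *ᵥ u)) + u ⬝ᵥ ((Mt * B) *ᵥ v) + v ⬝ᵥ ((Bᵀ * Mt) *ᵥ u)
          - mu * (v ⬝ᵥ v) ≤ 0 := by
      rw [← hexp]
      have : (0:ℝ) ≤ -(Sum.elim u v ⬝ᵥ
        ((Matrix.fromBlocks (Mt * A + Aᵀ * Mt + Mp + lam • Mt) (Mt * B)
          (Bᵀ * Mt) (-(mu • (1 : Matrix (Fin l) (Fin l) ℝ)))) *ᵥ Sum.elim u v)) := by
        simpa [neg_mulVec, dotProduct_neg] using hpsd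
      linarith
    have e1 : u ⬝ᵥ ((Aᵀ * Mt) *ᵥ u) = (A *ᵥ u) ⬝ᵥ (Mt *ᵥ u) := by
      rw [← Matrix.mulVec_mulVec, Matrix.dotProduct_mulVec, Matrix.vecMul_transpose]
    have e2 : v ⬝ᵥ ((Bᵀ * Mt) *ᵥ u) = (B *ᵥ v) ⬝ᵥ (Mt *ᵥ u) := by
      rw [← Matrix.mulVec_mulVec, Matrix.dotProduct_mulVec, Matrix.vecMul_transpose]
    have e3 : u ⬝ᵥ ((Mt * A) *ᵥ u) = u ⬝ᵥ (Mt *ᵥ (A *ᵥ u)) := by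
      rw [← Matrix.mulVec_mulVec]
    have e4 : u ⬝ᵥ ((Mt * B) *ᵥ v) = u ⬝ᵥ (Mt *ᵥ (B *ᵥ v)) := by
      rw [← Matrix.mulVec_mulVec]
    have hVdeq : Vd t = (A *ᵥ u) ⬝ᵥ (Mt *ᵥ u) + (B *ᵥ v) ⬝ᵥ (Mt *ᵥ u)
        + u ⬝ᵥ (Mp *ᵥ u) + u ⬝ᵥ (Mt *ᵥ (A *ᵥ u)) + u ⬝ᵥ (Mt *ᵥ (B *ᵥ v)) := by
      simp only [hVd, add_dotProduct, Matrix.mulVec_add, dotProduct_add]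
      ring
    rw [hVdeq, hV]
    rw [e1, e2, e3, e4] at hineq2
    have := mul_le_mul_of_nonneg_left hww (le_of_lt hmu)
    linarith
  -- Gronwall
  set c : ℝ := (mu / lam) * W ^ 2 with hc
  set g : ℝ → ℝ := fun s => Real.exp (lam * s) * V s - c * Real.exp (lam * s) with hg
  have hgd : ∀ t ∈ S, HasDerivWithinAt g
      (Real.exp (lam * t) * lam * V t + Real.exp (lam * t) * Vd t
        - c * (Real.exp (lam * t) * lam)) S t := by
    intro t ht
    have he : HasDerivAt (fun s => Real.exp (lam * s)) (Real.exp (lam * t) * lam) t := by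
      simpa using ((hasDerivAt_id t).const_mul lam).exp
    exact (he.hasDerivWithinAt.mul (hVderiv t ht)).sub
      (he.hasDerivWithinAt.const_mul c)
  have hgcont : ContinuousOn g S := fun t ht => (hgd t ht).continuousWithinAt
  have hanti : AntitoneOn g S := by
    apply antitoneOn_of_deriv_nonpos (convex_Icc 0 T) hgcont
    · intro t ht
      rw [interior_Icc] at ht
      exact (((hgd t ⟨le_of_lt ht.1, le_of_lt ht.2⟩).hasDerivAt
        (Icc_mem_nhds ht.1 ht.2)).differentiableAt).differentiableWithinAt
    · intro t ht
      rw [interior_Icc] at ht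
      have htS : t ∈ S := ⟨le_of_lt ht.1, le_of_lt ht.2⟩
      have hd := ((hgd t htS).hasDerivAt (Icc_mem_nhds ht.1 ht.2)).deriv
      rw [hd]
      have hk := hkey t htS
      have hcl : c * lam = mu * W ^ 2 := by
        rw [hc]; field_simp
      have hE : (0:ℝ) < Real.exp (lam * t) := Real.exp_pos _
      nlinarith [mul_le_mul_of_nonneg_left hk (le_of_lt hE)]
  intro t ht
  have h0S : (0:ℝ) ∈ S := ⟨le_refl 0, hT⟩
  have hgt : g t ≤ g 0 := hanti h0S ht ht.1
  have hE : (0:ℝ) < Real.exp (lam * t) := Real.exp_pos _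
  have hEi : (0:ℝ) < Real.exp (-lam * t) := Real.exp_pos _
  have hEE : Real.exp (-lam * t) * Real.exp (lam * t) = 1 := by
    rw [← Real.exp_add]; ring_nf; exact Real.exp_zero
  have hg0 : g 0 = V 0 - c := by simp [hg]
  rw [hg0] at hgt
  have hgt' : Real.exp (lam * t) * V t - c * Real.exp (lam * t) ≤ V 0 - c := hgt
  have := mul_le_mul_of_nonneg_left hgt' (le_of_lt hEi)
  have h3 : Real.exp (-lam * t) * (Real.exp (lam * t) * V t - c * Real.exp (lam * t))
      = V t - c := by linear_combination (V t - c) * hEE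
  rw [h3] at this
  have h4 : Real.exp (-lam * t) * (V 0 - c)
      = Real.exp (-lam * t) * V 0 - Real.exp (-lam * t) * c := by ring
  show V t ≤ Real.exp (-lam * t) * V 0 + c * (1 - Real.exp (-lam * t))
  rw [h4] at this
  nlinarith [this]
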